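/- Let K be a symmetric positive definite N × N real matrix, let σ² > 0, and let y ∈ ℝ^N. Define the negative penalized log-likelihood −log L(f, σ²; y, K) := (N/2) log(2π σ²) + (1/(2σ²)) Σ_{i=1}^N (y_i − f_i)² + (1/2) fᵀ K^{-1} f + (1/2) log |det(I + σ^{-2} K)| for f ∈ ℝ^N. Then the unique minimizer over f is f̂ = K (K + σ² I)^{-1} y, and the minimum value equals −log N(y | 0, K + σ² I) = (N/2) log(2π) + (1/2) log det(K + σ² I) + (1/2) yᵀ (K + σ² I)^{-1} y. -/

import Mathlib

open Real Matrix

/-- **GP regression as penalized maximum likelihood.**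
Let `K` be a symmetric positive definite `N × N` real matrix, `σ² > 0`, `y ∈ ℝ^N`. Define
the negative penalized log-likelihood
`L f := (N/2)·log(2π σ²) + (1/(2σ²)) Σᵢ (yᵢ − fᵢ)² + (1/2) fᵀ K⁻¹ f + (1/2) log |det(I + σ⁻² K)|`.
Then the unique minimizer over `f` is `f̂ = K (K + σ² I)⁻¹ y`, and the minimum value equals
`−log N(y | 0, K + σ² I) = (N/2) log(2π) + (1/2) log det(K + σ² I) + (1/2) yᵀ (K + σ² I)⁻¹ y`. -/
theorem gp_penalized_likelihood_minimizer
    (N : ℕ) (K : Matrix (Fin N) (Fin N) ℝ) (hKsymm : K.IsSymm) (hKpos : K.PosDef)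
    (σ2 : ℝ) (hσ2 : 0 < σ2) (y : Fin N → ℝ)
    (L : (Fin N → ℝ) → ℝ)
    (hL : L = fun f => (N / 2 : ℝ) * Real.log (2 * π * σ2)
        + (1 / (2 * σ2)) * ∑ i, (y i - f i) ^ 2
        + (1 / 2) * (f ⬝ᵥ (K⁻¹ *ᵥ f))
        + (1 / 2) * Real.log |((1 : Matrix (Fin N) (Fin N) ℝ) + σ2⁻¹ • K).det|)
    (fhat : Fin N → ℝ)
    (hfhat : fhat = K *ᵥ ((K + σ2 • (1 : Matrix (Fin N) (Fin N) ℝ))⁻¹ *ᵥ y)) :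
    (∀ f : Fin N → ℝ, f ≠ fhat → L fhat < L f) ∧
      L fhat = (N / 2 : ℝ) * Real.log (2 * π)
        + (1 / 2) * Real.log ((K + σ2 • (1 : Matrix (Fin N) (Fin N) ℝ)).det)
        + (1 / 2) * (y ⬝ᵥ ((K + σ2 • (1 : Matrix (Fin N) (Fin N) ℝ))⁻¹ *ᵥ y)) := by
  set A : Matrix (Fin N) (Fin N) ℝ := K + σ2 • 1 with hAdef
  have hA : A.PosDef := hKpos.add_posSemidef (by
    rw [smul_one_eq_diagonal]
    exact (Matrix.PosDef.diagonal fun _ => hσ2).posSemidef)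
  have hAunit : IsUnit A.det := isUnit_iff_ne_zero.2 (ne_of_gt hA.det_pos)
  have hAA : A * A⁻¹ = 1 := mul_nonsing_inv A hAunit
  have hKunit : IsUnit K.det := isUnit_iff_ne_zero.2 (ne_of_gt hKpos.det_pos)
  have hKK : K⁻¹ * K = 1 := nonsing_inv_mul K hKunit
  have hy : y = A *ᵥ (A⁻¹ *ᵥ y) := by rw [mulVec_mulVec, hAA, one_mulVec]
  set M : Matrix (Fin N) (Fin N) ℝ := σ2⁻¹ • 1 + K⁻¹ with hMdef
  have hMpos : M.PosDef := Matrix.PosDef.add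
    (by rw [smul_one_eq_diagonal]; exact .diagonal fun _ => by positivity) hKpos.inv
  have hMsymm : Mᵀ = M := hMpos.isHermitian.eq
  have hpair : ∀ u v : Fin N → ℝ, u ⬝ᵥ (M *ᵥ v) = v ⬝ᵥ (M *ᵥ u) := by
    intro u v
    rw [dotProduct_mulVec, ← mulVec_transpose, hMsymm, dotProduct_comm]
  have hKv : ∀ x : Fin N → ℝ, K⁻¹ *ᵥ (K *ᵥ x) = x := by
    intro x; rw [mulVec_mulVec, hKK, one_mulVec]
  have hMfhat : M *ᵥ fhat = σ2⁻¹ • y := by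
    rw [hfhat, hMdef, add_mulVec, smul_mulVec, one_mulVec, hKv]
    conv_rhs => rw [hy]
    rw [hAdef, add_mulVec, smul_mulVec, one_mulVec, smul_add, smul_smul,
      inv_mul_cancel₀ hσ2.ne', one_smul]
  have hsum : ∀ f : Fin N → ℝ, ∑ i, (y i - f i) ^ 2 = (y - f) ⬝ᵥ (y - f) := by
    intro f
    simp [dotProduct, Pi.sub_apply, sq]
  have hQ : ∀ f : Fin N → ℝ,
      (1 / (2 * σ2)) * ((y - f) ⬝ᵥ (y - f)) + (1 / 2) * (f ⬝ᵥ (K⁻¹ *ᵥ f))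
        = (1 / 2) * (f ⬝ᵥ (M *ᵥ f)) - σ2⁻¹ * (y ⬝ᵥ f) + (1 / (2 * σ2)) * (y ⬝ᵥ y) := by
    intro f
    rw [hMdef, add_mulVec, smul_mulVec, one_mulVec, dotProduct_add,
      dotProduct_smul, smul_eq_mul, dotProduct_sub, sub_dotProduct, sub_dotProduct,
      dotProduct_comm f y]
    field_simp
    ring
  have hfhMf : fhat ⬝ᵥ (M *ᵥ fhat) = σ2⁻¹ * (y ⬝ᵥ fhat) := by
    rw [hMfhat, dotProduct_smul, smul_eq_mul, dotProduct_comm]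
  have hdiff : ∀ f : Fin N → ℝ,
      L f = L fhat + (1 / 2) * ((f - fhat) ⬝ᵥ (M *ᵥ (f - fhat))) := by
    intro f
    have h1 := hQ f
    have h2 := hQ fhat
    have hfM : f ⬝ᵥ (M *ᵥ fhat) = σ2⁻¹ * (y ⬝ᵥ f) := by
      rw [hMfhat, dotProduct_smul, smul_eq_mul, dotProduct_comm]
    have hexp : (f - fhat) ⬝ᵥ (M *ᵥ (f - fhat))
        = f ⬝ᵥ (M *ᵥ f) - 2 * (f ⬝ᵥ (M *ᵥ fhat)) + fhat ⬝ᵥ (M *ᵥ fhat) := by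
      rw [mulVec_sub, dotProduct_sub, sub_dotProduct, sub_dotProduct, hpair fhat f]
      ring
    simp only [hL, hsum]
    rw [hexp, hfM, hfhMf]
    linear_combination h1 - h2 - (1 / 2) * hfhMf
  have hyfhat : y - fhat = σ2 • (A⁻¹ *ᵥ y) := by
    conv_lhs => rw [hy, hfhat]
    rw [hAdef, add_mulVec, smul_mulVec, one_mulVec, add_sub_cancel_left]
  constructor
  · intro f hf
    have hd : f - fhat ≠ 0 := sub_ne_zero.2 hf
    have hpos : 0 < (f - fhat) ⬝ᵥ (M *ᵥ (f - fhat)) := by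
      simpa using hMpos.dotProduct_mulVec_pos hd
    rw [hdiff f]
    linarith
  · have h2 := hQ fhat
    have hYh : y ⬝ᵥ y - y ⬝ᵥ fhat = σ2 * (y ⬝ᵥ (A⁻¹ *ᵥ y)) := by
      rw [← dotProduct_sub, hyfhat, dotProduct_smul, smul_eq_mul]
    have hlog1 : Real.log (2 * π * σ2) = Real.log (2 * π) + Real.log σ2 :=
      Real.log_mul (by positivity) hσ2.ne'
    have hdet1 : ((1 : Matrix (Fin N) (Fin N) ℝ) + σ2⁻¹ • K) = σ2⁻¹ • A := by
      rw [hAdef, smul_add, smul_smul, inv_mul_cancel₀ hσ2.ne', one_smul, add_comm]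
    have hlogdet : Real.log |((1 : Matrix (Fin N) (Fin N) ℝ) + σ2⁻¹ • K).det|
        = Real.log A.det - N * Real.log σ2 := by
      rw [hdet1, det_smul, Fintype.card_fin,
        abs_of_pos (mul_pos (pow_pos (inv_pos.2 hσ2) N) hA.det_pos), Real.log_mul (by positivity) hA.det_pos.ne',
        Real.log_pow, Real.log_inv]
      ring
    simp only [hL, hsum, ← hAdef]
    rw [hlog1, hlogdet]
    have hss : σ2 * σ2⁻¹ = 1 := mul_inv_cancel₀ hσ2.ne'
    linear_combination h2 + (1 / 2) * hfhMf + (1 / (2 * σ2)) * hYh + (1 / 2 * (y ⬝ᵥ (A⁻¹ *ᵥ y))) * hss
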